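/- Suppose Q and Q′ are two symmetric biadditive maps Ω¹ × Ω¹ → Ω², each satisfying the product identity Q(f·β, γ) = f·Q(β,γ) + β ∧ P₁(f,γ) and the Leibniz identity d₁(P₁(f,β)) = Q(d₀f, β) + P₂(f, d₁β) for all f ∈ A and β, γ ∈ Ω¹. If every element of Ω¹ is a finite sum of elements of the form f·d₀g with f, g ∈ A, then Q = Q′. (The product and Leibniz identities uniquely determine the generalized Poisson bracket of two 1-forms.) -/
import Mathlib


/-- The product and Leibniz identities uniquely determine the generalized Poisson bracket
of two 1-forms: if `Q` and `Q'` are symmetric biadditive maps `Ω¹ × Ω¹ → Ω²` each satisfying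
`Q(f•β,γ) = f•Q(β,γ) + β ∧ P₁(f,γ)` and `d₁(P₁(f,β)) = Q(d₀f,β) + P₂(f,d₁β)`, and `Ω¹` is
generated over `A` by exact 1-forms, then `Q = Q'`. -/
theorem oneform_bracket_unique
    {A : Type*} [CommRing A]
    {Ω1 Ω2 : Type*} [AddCommGroup Ω1] [Module A Ω1] [AddCommGroup Ω2] [Module A Ω2]
    (w : Ω1 →ₗ[A] Ω1 →ₗ[A] Ω2)
    (d0 : A →+ Ω1) (hd0 : ∀ f g : A, d0 (f * g) = f • d0 g + g • d0 f)
    (d1 : Ω1 →+ Ω2) (hd1d0 : ∀ f : A, d1 (d0 f) = 0)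
    (P0 : A →+ A →+ A) (P1 : A →+ Ω1 →+ Ω1) (P2 : A →+ Ω2 →+ Ω2)
    (hP0 : ∀ f g h : A, P0 f (g * h) = g * P0 f h + h * P0 f g)
    (hP1L : ∀ (f g : A) (β : Ω1), P1 (f * g) β = f • P1 g β + g • P1 f β)
    (hP1R : ∀ (f g : A) (β : Ω1), P1 f (g • β) = P0 f g • β + g • P1 f β)
    (hP2L : ∀ (f g : A) (ω : Ω2), P2 f (g • ω) = P0 f g • ω + g • P2 f ω)
    (hP2w : ∀ (f : A) (β γ : Ω1), P2 f (w β γ) = w (P1 f β) γ + w β (P1 f γ))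
    (hflat : ∀ (f g : A) (β : Ω1), P1 f (P1 g β) - P1 g (P1 f β) = P1 (P0 f g) β)
    (htf : ∀ f g : A, P1 f (d0 g) - P1 g (d0 f) = d0 (P0 f g))
    (Q Q' : Ω1 →+ Ω1 →+ Ω2)
    (hQsymm : ∀ β γ : Ω1, Q β γ = Q γ β)
    (hQ'symm : ∀ β γ : Ω1, Q' β γ = Q' γ β)
    (hQprod : ∀ (f : A) (β γ : Ω1), Q (f • β) γ = f • Q β γ + w β (P1 f γ))
    (hQ'prod : ∀ (f : A) (β γ : Ω1), Q' (f • β) γ = f • Q' β γ + w β (P1 f γ))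
    (hQLeib : ∀ (f : A) (β : Ω1), d1 (P1 f β) = Q (d0 f) β + P2 f (d1 β))
    (hQ'Leib : ∀ (f : A) (β : Ω1), d1 (P1 f β) = Q' (d0 f) β + P2 f (d1 β))
    (hgen : ∀ β : Ω1, β ∈ Submodule.span A (Set.range (d0 : A → Ω1))) :
    ∀ β γ : Ω1, Q β γ = Q' β γ := by
  intro β γ
  have hexact : ∀ (f : A) (δ : Ω1), Q (d0 f) δ = Q' (d0 f) δ := by
    intro f δ
    have h1 := hQLeib f δ
    have h2 := hQ'Leib f δ
    have : Q (d0 f) δ + P2 f (d1 δ) = Q' (d0 f) δ + P2 f (d1 δ) := by rw [← h1, ← h2]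
    exact add_right_cancel this
  refine Submodule.span_induction ?_ ?_ ?_ ?_ (hgen β)
  · rintro x ⟨f, rfl⟩; exact hexact f γ
  · simp
  · intro x y _ _ hx hy
    simp [map_add, hx, hy]
  · intro a x _ hx
    rw [hQprod, hQ'prod, hx]
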